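/- (Termination theorem) Let R be a commutative ring, ≺ a monomial ordering on the standard monomial basis B of R⟨X₁,…,Xₙ⟩, and G an LM-reduced monic subset of R⟨X₁,…,Xₙ⟩. Then G is a monic Gröbner basis of the ideal I = ⟨G⟩ if and only if for every pair g, g' ∈ G (including g = g') and all u, v ∈ B such that LM(g)·u = v·LM(g') with the length of u strictly less than the length of LM(g') and the length of v strictly less than the length of LM(g), the overlap element o(g,u;v,g') = g·u − v·g' is reduced to 0 by division by G, i.e., o(g,u;v,g') is either 0 or can be written as a finite sum Σ λ_k w_k g_k s_k with λ_k ∈ R, w_k, s_k ∈ B, g_k ∈ G, and LM(w_k g_k s_k) ≺ LM(g)·u whenever λ_k ≠ 0. -/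

import Mathlib

noncomputable section
open MonoidAlgebra
open scoped Classical

/-- Words in the alphabet `X_1, ..., X_n`: the standard monomial basis `B`. -/
abbrev Word (n : ℕ) : Type := FreeMonoid (Fin n)

/-- The free `R`-algebra `R⟨X_1, ..., X_n⟩`, realized as the monoid algebra of the
free monoid on `n` letters over `R`. -/
abbrev FreeAlg (R : Type) [CommRing R] (n : ℕ) : Type := MonoidAlgebra R (Word n)

variable {R : Type} [CommRing R] {n : ℕ}

/-- The monomial (word) `w` viewed as an element of the free algebra. -/
def mono (R : Type) [CommRing R] {n : ℕ} (w : Word n) : FreeAlg R n :=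
  MonoidAlgebra.of R (Word n) w

/-- A monomial ordering: a well-ordering on words compatible with two-sided multiplication. -/
def IsMonomialOrder (n : ℕ) [LinearOrder (Word n)] : Prop :=
  WellFoundedLT (Word n) ∧ ∀ w u v s : Word n, u < v → w * u * s < w * v * s

/-- The leading monomial of `f` (with junk value `1` for `f = 0`). -/
def LMon [LinearOrder (Word n)] (f : FreeAlg R n) : Word n :=
  if h : f = 0 then 1 else f.coeff.support.max'
    (Finsupp.support_nonempty_iff.mpr (fun h' => h (by
      rw [← MonoidAlgebra.ofCoeff_coeff f, h', MonoidAlgebra.ofCoeff_zero])))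

/-- The leading coefficient of `f`. -/
def LCoef [LinearOrder (Word n)] (f : FreeAlg R n) : R := f.coeff (LMon f)

/-- `f` is monic: it is nonzero and its leading coefficient is `1`. -/
def IsMonic [LinearOrder (Word n)] (f : FreeAlg R n) : Prop := f ≠ 0 ∧ LCoef f = 1

/-- `v` divides `u` as words: `u = w * v * s` for some words `w, s`. -/
def MDvd {n : ℕ} (v u : Word n) : Prop := ∃ w s : Word n, u = w * v * s

/-- `G` is a monic Gröbner basis of the two-sided ideal `I`: every element of `G` is monic,
and the leading monomial of every nonzero element of `I` is divisible by the leading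
monomial of some element of `G`. -/
def IsMonicGB [LinearOrder (Word n)] (G : Set (FreeAlg R n))
    (I : TwoSidedIdeal (FreeAlg R n)) : Prop :=
  (∀ g ∈ G, IsMonic g) ∧ ∀ f ∈ I, f ≠ 0 → ∃ g ∈ G, MDvd (LMon g) (LMon f)

/-- `G` is LM-reduced: for distinct `g, g' ∈ G`, `LM(g)` does not divide `LM(g')`. -/
def LMReduced [LinearOrder (Word n)] (G : Set (FreeAlg R n)) : Prop :=
  ∀ g ∈ G, ∀ g' ∈ G, g ≠ g' → ¬ MDvd (LMon g) (LMon g')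

set_option linter.unusedSectionVars false
set_option maxHeartbeats 1000000

instance FA_coeFun : CoeFun (FreeAlg R n) (fun _ => Word n → R) := ⟨fun f => f.coeff⟩

-- basic facts
lemma mono_mul (u v : Word n) : mono R (u * v) = mono R u * mono R v := map_mul _ _ _

lemma mono_def (w : Word n) : mono R w = MonoidAlgebra.single w 1 := rfl

lemma sandwich_inj (w s : Word n) : Function.Injective fun m : Word n => w * m * s := by
  intro a b h
  simp only at h
  exact mul_left_cancel (mul_right_cancel h)

/-- `mono w * f * mono s` is `f` with domain mapped by `m ↦ w*m*s`. -/
lemma sandwich_eq (w s : Word n) (f : FreeAlg R n) :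
    (mono R w * f * mono R s).coeff = Finsupp.mapDomain (fun m => w * m * s) f.coeff := by
  induction f using MonoidAlgebra.induction_linear with
  | zero => simp
  | add f g hf hg => rw [mul_add, add_mul, coeff_add, hf, hg, coeff_add, Finsupp.mapDomain_add]
  | single a b =>
    rw [mono_def, mono_def, coeff_single, Finsupp.mapDomain_single]
    rw [MonoidAlgebra.single_mul_single, MonoidAlgebra.single_mul_single, one_mul, mul_one,
      coeff_single]

lemma sandwich_apply (w s : Word n) (f : FreeAlg R n) (m : Word n) :
    (mono R w * f * mono R s) (w * m * s) = f m := by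
  rw [sandwich_eq, Finsupp.mapDomain_apply (sandwich_inj w s)]

lemma mem_sandwich_support (w s : Word n) (f : FreeAlg R n) (m : Word n) :
    m ∈ (mono R w * f * mono R s).coeff.support ↔ ∃ x ∈ f.coeff.support, w * x * s = m := by
  classical
  rw [sandwich_eq]
  rw [Finsupp.mapDomain_support_of_injective (sandwich_inj w s) f.coeff]
  simp [Finset.mem_image]

lemma sandwich_ne_zero (w s : Word n) {f : FreeAlg R n} (hf : f ≠ 0) :
    mono R w * f * mono R s ≠ 0 := by
  intro h
  apply hf
  ext m
  by_contra hc
  have hm : w * m * s ∈ (mono R w * f * mono R s).coeff.support :=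
    (mem_sandwich_support w s f _).mpr ⟨m, Finsupp.mem_support_iff.mpr (by simpa using hc), rfl⟩
  rw [h] at hm
  simp at hm

section Order
variable [LinearOrder (Word n)] (hord : IsMonomialOrder n)
include hord

lemma one_le_word (w : Word n) : (1 : Word n) ≤ w := by
  induction w using (hord.1.wf).induction with
  | _ w ih =>
    by_contra h
    push_neg at h
    have h2 : w * w < w := by
      have := hord.2 w w 1 1 h
      simpa using this
    exact absurd ((ih _ h2).trans h2.le) (not_le.mpr h)

lemma word_mul_lt (w s : Word n) {u v : Word n} (h : u < v) : w * u * s < w * v * s :=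
  hord.2 w u v s h

lemma word_mul_le (w s : Word n) {u v : Word n} (h : u ≤ v) : w * u * s ≤ w * v * s := by
  rcases h.lt_or_eq with h | h
  · exact (word_mul_lt hord w s h).le
  · rw [h]

lemma word_lt_left {u v : Word n} (h : u < v) (s : Word n) : u * s < v * s := by
  have := word_mul_lt hord 1 s h; simpa using this

lemma word_lt_right (w : Word n) {u v : Word n} (h : u < v) : w * u < w * v := by
  have := word_mul_lt hord w 1 h; simpa using this

end Order

section LM
variable [LinearOrder (Word n)]

lemma lm_mem {f : FreeAlg R n} (hf : f ≠ 0) : LMon f ∈ f.coeff.support := by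
  rw [LMon, dif_neg hf]; exact Finset.max'_mem _ _

lemma le_lm {f : FreeAlg R n} (hf : f ≠ 0) {m : Word n} (hm : m ∈ f.coeff.support) : m ≤ LMon f := by
  rw [LMon, dif_neg hf]; exact Finset.le_max' _ _ hm

lemma lm_eq_of {f : FreeAlg R n} (hf : f ≠ 0) {t : Word n} (ht : t ∈ f.coeff.support)
    (h : ∀ m ∈ f.coeff.support, m ≤ t) : LMon f = t :=
  le_antisymm (h _ (lm_mem hf)) (le_lm hf ht)

lemma lcoef_ne_zero {f : FreeAlg R n} (hf : f ≠ 0) : LCoef f ≠ 0 :=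
  Finsupp.mem_support_iff.mp (lm_mem hf)

lemma coeff_eq_zero_of_lm_lt {f : FreeAlg R n} {m : Word n} (h : LMon f < m) : f m = 0 := by
  by_cases hf : f = 0
  · simp [hf]
  · by_contra hc
    exact absurd (le_lm hf (Finsupp.mem_support_iff.mpr hc)) (not_le.mpr h)

end LM

section Order2
variable [LinearOrder (Word n)] (hord : IsMonomialOrder n)
include hord

lemma lm_sandwich (w s : Word n) {f : FreeAlg R n} (hf : f ≠ 0) :
    LMon (mono R w * f * mono R s) = w * LMon f * s := by
  refine lm_eq_of (sandwich_ne_zero w s hf) ?_ ?_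
  · exact (mem_sandwich_support w s f _).mpr ⟨_, lm_mem hf, rfl⟩
  · intro m hm
    obtain ⟨x, hx, rfl⟩ := (mem_sandwich_support w s f m).mp hm
    exact word_mul_le hord w s (le_lm hf hx)

lemma lcoef_sandwich (w s : Word n) {f : FreeAlg R n} (hf : f ≠ 0) :
    LCoef (mono R w * f * mono R s) = LCoef f := by
  rw [LCoef, lm_sandwich hord w s hf, sandwich_apply]; rfl

end Order2

@[simp] lemma FA_add_apply (f g : FreeAlg R n) (m : Word n) : (f + g) m = f m + g m :=
  rfl

@[simp] lemma FA_smul_apply (c : R) (f : FreeAlg R n) (m : Word n) : (c • f) m = c * f m :=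
  rfl

@[simp] lemma FA_sub_apply (f g : FreeAlg R n) (m : Word n) : (f - g) m = f m - g m :=
  rfl

@[simp] lemma FA_neg_apply (f : FreeAlg R n) (m : Word n) : (-f) m = -(f m) :=
  rfl

section Terms
variable [LinearOrder (Word n)]

/-- A "term": coefficient, left word, generator, right word. -/
abbrev Term (R : Type) [CommRing R] (n : ℕ) : Type := R × Word n × FreeAlg R n × Word n

def tval (τ : Term R n) : FreeAlg R n := τ.1 • (mono R τ.2.1 * τ.2.2.1 * mono R τ.2.2.2)

def bnd (τ : Term R n) : Word n := τ.2.1 * LMon τ.2.2.1 * τ.2.2.2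

def evalL (L : List (Term R n)) : FreeAlg R n := (L.map tval).sum

def GT (G : Set (FreeAlg R n)) (L : List (Term R n)) : Prop := ∀ τ ∈ L, τ.2.2.1 ∈ G

@[simp] lemma evalL_nil : evalL ([] : List (Term R n)) = 0 := rfl

@[simp] lemma evalL_cons (τ : Term R n) (L : List (Term R n)) :
    evalL (τ :: L) = tval τ + evalL L := by simp [evalL]

@[simp] lemma evalL_append (L₁ L₂ : List (Term R n)) :
    evalL (L₁ ++ L₂) = evalL L₁ + evalL L₂ := by simp [evalL]

def scaleT (c : R) (τ : Term R n) : Term R n := (c * τ.1, τ.2)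

@[simp] lemma tval_scaleT (c : R) (τ : Term R n) : tval (scaleT c τ) = c • tval τ := by
  simp [tval, scaleT, mul_smul]

@[simp] lemma bnd_scaleT (c : R) (τ : Term R n) : bnd (scaleT c τ) = bnd τ := rfl

lemma evalL_map_scaleT (c : R) (L : List (Term R n)) :
    evalL (L.map (scaleT c)) = c • evalL L := by
  induction L with
  | nil => simp
  | cons τ L ih => simp [ih, smul_add]

lemma evalL_toList_map {α : Type*} (S : Finset α) (F : α → Term R n) :
    evalL (S.toList.map F) = ∑ x ∈ S, tval (F x) := by
  rw [evalL, List.map_map]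
  exact Finset.sum_map_toList S (tval ∘ F)

lemma supp_tval (hord : IsMonomialOrder n) {τ : Term R n} {m : Word n}
    (hm : m ∈ (tval τ).coeff.support) : τ.2.2.1 ≠ 0 ∧ m ≤ bnd τ := by
  obtain ⟨c, w, g, s⟩ := τ
  have hm' : m ∈ (mono R w * g * mono R s).coeff.support := by
    have := Finsupp.support_smul (b := c) (g := (mono R w * g * mono R s).coeff)
    exact this hm
  have hg : g ≠ 0 := by
    rintro rfl
    simp at hm'
  obtain ⟨x, hx, rfl⟩ := (mem_sandwich_support w s g m).mp hm'
  exact ⟨hg, word_mul_le hord w s (le_lm hg hx)⟩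

lemma supp_evalL (hord : IsMonomialOrder n) {L : List (Term R n)} {m : Word n}
    (hm : m ∈ (evalL L).coeff.support) : ∃ τ ∈ L, τ.2.2.1 ≠ 0 ∧ m ≤ bnd τ := by
  induction L with
  | nil => simp at hm
  | cons τ L ih =>
    rw [evalL_cons, coeff_add] at hm
    rcases Finset.mem_union.mp (Finsupp.support_add hm) with h | h
    · exact ⟨τ, List.mem_cons_self .., supp_tval hord h⟩
    · obtain ⟨σ, hσ, hh⟩ := ih h
      exact ⟨σ, List.mem_cons_of_mem _ hσ, hh⟩

lemma tval_coeff_top (hord : IsMonomialOrder n) {τ : Term R n} (hτ : IsMonic τ.2.2.1)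
    {t : Word n} (ht : bnd τ = t) : tval τ t = τ.1 := by
  obtain ⟨c, w, g, s⟩ := τ
  simp only [bnd] at ht
  subst ht
  simp only [tval, FA_smul_apply]
  rw [sandwich_apply]
  have : g (LMon g) = 1 := hτ.2
  rw [this, mul_one]

lemma tval_coeff_lt {τ : Term R n} (hg : τ.2.2.1 ≠ 0) (hord : IsMonomialOrder n)
    {t : Word n} (ht : bnd τ < t) : tval τ t = 0 := by
  by_contra hc
  have := supp_tval hord (τ := τ) (m := t) (Finsupp.mem_support_iff.mpr hc)
  exact absurd this.2 (not_le.mpr ht)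

lemma evalL_coeff_top (hord : IsMonomialOrder n) {L : List (Term R n)}
    (hmono : ∀ τ ∈ L, IsMonic τ.2.2.1) {t : Word n} (hb : ∀ τ ∈ L, bnd τ ≤ t) :
    evalL L t = ((L.filter (fun τ => bnd τ = t)).map (fun τ => τ.1)).sum := by
  induction L with
  | nil => simp [evalL]
  | cons τ L ih =>
    have hτ := hmono τ (List.mem_cons_self ..)
    rw [evalL_cons]
    have hrec := ih (fun σ hσ => hmono σ (List.mem_cons_of_mem _ hσ))
      (fun σ hσ => hb σ (List.mem_cons_of_mem _ hσ))
    by_cases h : bnd τ = t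
    · rw [List.filter_cons_of_pos (by simpa using h)]
      simp only [FA_add_apply, List.map_cons, List.sum_cons]
      rw [hrec, tval_coeff_top hord hτ h]
    · rw [List.filter_cons_of_neg (by simpa using h)]
      simp only [FA_add_apply]
      rw [hrec, tval_coeff_lt hτ.1 hord (lt_of_le_of_ne (hb τ (List.mem_cons_self ..)) h),
        zero_add]

end Terms

section Span
variable [LinearOrder (Word n)]

lemma decomp (a : FreeAlg R n) : a = ∑ u ∈ a.coeff.support, a u • mono R u := by
  conv_lhs => rw [← sum_coeff_single a]
  rw [Finsupp.sum]
  refine Finset.sum_congr rfl fun u hu => ?_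
  rw [mono_def, MonoidAlgebra.smul_single', mul_one]

lemma prod_rep (G : Set (FreeAlg R n)) (a b g : FreeAlg R n) (hg : g ∈ G) :
    ∃ L : List (Term R n), GT G L ∧ evalL L = a * g * b := by
  classical
  refine ⟨(a.coeff.support ×ˢ b.coeff.support).toList.map (fun p => (a p.1 * b p.2, p.1, g, p.2)), ?_, ?_⟩
  · intro τ hτ
    obtain ⟨p, _, rfl⟩ := List.mem_map.mp hτ
    exact hg
  · rw [evalL_toList_map]
    have : ∀ p : Word n × Word n, tval ((a p.1 * b p.2, p.1, g, p.2) : Term R n)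
        = (a p.1 • mono R p.1) * g * (b p.2 • mono R p.2) := by
      intro p
      simp only [tval, smul_mul_assoc, mul_smul_comm, smul_smul]
      rw [mul_comm (b p.2) (a p.1)]
    simp only [this]
    rw [Finset.sum_product]
    conv_rhs => rw [decomp a, decomp b]
    simp only [Finset.sum_mul, Finset.mul_sum, smul_mul_assoc, mul_smul_comm,
      Finset.smul_sum, mul_assoc]
    rw [Finset.sum_comm]

lemma span_rep {G : Set (FreeAlg R n)} {f : FreeAlg R n} (hf : f ∈ TwoSidedIdeal.span G) :
    ∃ L : List (Term R n), GT G L ∧ evalL L = f := by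
  rw [TwoSidedIdeal.mem_span_iff_mem_addSubgroup_closure] at hf
  induction hf using AddSubgroup.closure_induction with
  | mem x hx =>
    obtain ⟨y, ⟨u, -, g, hg, rfl⟩, v, -, rfl⟩ := hx
    exact prod_rep G u v g hg
  | zero => exact ⟨[], by simp [GT], rfl⟩
  | add x y _ _ ihx ihy =>
    obtain ⟨L₁, h₁, e₁⟩ := ihx
    obtain ⟨L₂, h₂, e₂⟩ := ihy
    refine ⟨L₁ ++ L₂, fun τ hτ => ?_, by rw [evalL_append, e₁, e₂]⟩
    rcases List.mem_append.mp hτ with h | h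
    · exact h₁ τ h
    · exact h₂ τ h
  | neg x _ ihx =>
    obtain ⟨L, h, e⟩ := ihx
    exact ⟨L.map (scaleT (-1)), fun τ hτ => by
      obtain ⟨σ, hσ, rfl⟩ := List.mem_map.mp hτ; exact h σ hσ,
      by rw [evalL_map_scaleT, e, neg_one_smul]⟩

lemma smul_mem_span (G : Set (FreeAlg R n)) (c : R) {x : FreeAlg R n}
    (hx : x ∈ TwoSidedIdeal.span G) : c • x ∈ TwoSidedIdeal.span G := by
  rw [Algebra.smul_def]
  exact TwoSidedIdeal.mul_mem_left _ _ _ hx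

lemma tval_mem_span (G : Set (FreeAlg R n)) (τ : Term R n) (hτ : τ.2.2.1 ∈ G) :
    tval τ ∈ TwoSidedIdeal.span G := by
  refine smul_mem_span G _ ?_
  exact TwoSidedIdeal.mul_mem_right _ _ _
    (TwoSidedIdeal.mul_mem_left _ _ _ (TwoSidedIdeal.subset_span hτ))

end Span

lemma mono_one : mono R (1 : Word n) = 1 := map_one (MonoidAlgebra.of R (Word n))

section Div
variable [LinearOrder (Word n)] {G : Set (FreeAlg R n)}

lemma sandwich_one_left (f : FreeAlg R n) (u : Word n) :
    f * mono R u = mono R 1 * f * mono R u := by rw [mono_one, one_mul]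

lemma sandwich_one_right (f : FreeAlg R n) (v : Word n) :
    mono R v * f = mono R v * f * mono R 1 := by rw [mono_one, mul_one]

lemma div_rep (hord : IsMonomialOrder n) (hGB : IsMonicGB G (TwoSidedIdeal.span G)) :
    ∀ f : FreeAlg R n, f ∈ TwoSidedIdeal.span G → f ≠ 0 →
      ∃ L : List (Term R n), GT G L ∧ evalL L = f ∧ ∀ τ ∈ L, bnd τ ≤ LMon f := by
  suffices H : ∀ t : Word n, ∀ f : FreeAlg R n, f ∈ TwoSidedIdeal.span G → f ≠ 0 →
      LMon f = t → ∃ L : List (Term R n), GT G L ∧ evalL L = f ∧ ∀ τ ∈ L, bnd τ ≤ LMon f by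
    intro f hf hne
    exact H (LMon f) f hf hne rfl
  intro t
  induction t using (hord.1.wf).induction with
  | _ t IH =>
  intro f hf hne hLM
  subst hLM
  obtain ⟨g, hg, w, s, ht⟩ := hGB.2 f hf hne
  have hgm := hGB.1 g hg
  have hgne : g ≠ 0 := hgm.1
  set g0 : FreeAlg R n := mono R w * g * mono R s with hg0
  have hg0ne : g0 ≠ 0 := sandwich_ne_zero w s hgne
  set c := LCoef f with hc
  set f' := f - c • g0 with hf'
  have hg0t : g0 (LMon f) = 1 := by
    rw [ht, hg0, sandwich_apply]
    exact hgm.2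
  have hf't : f' (LMon f) = 0 := by
    rw [hf', FA_sub_apply, FA_smul_apply, hg0t, mul_one, hc, LCoef, sub_self]
  have hsupp : ∀ m ∈ f'.coeff.support, m ≤ LMon f := by
    intro m hm
    have := Finsupp.support_sub hm
    rcases Finset.mem_union.mp this with h | h
    · exact le_lm hne h
    · have h2 : m ∈ g0.coeff.support := by
        have := Finsupp.support_smul h
        exact this
      obtain ⟨x, hx, rfl⟩ := (mem_sandwich_support w s g _).mp h2
      rw [ht]
      exact word_mul_le hord w s (le_lm hgne hx)
  have hbndt : bnd ((c, w, g, s) : Term R n) = LMon f := by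
    simp only [bnd]; exact ht.symm
  by_cases h0 : f' = 0
  · refine ⟨[(c, w, g, s)], ?_, ?_, ?_⟩
    · intro τ hτ
      rcases List.mem_singleton.mp hτ with rfl
      exact hg
    · rw [evalL_cons, evalL_nil, add_zero]
      have : tval ((c, w, g, s) : Term R n) = c • g0 := rfl
      rw [this]
      exact (sub_eq_zero.mp h0).symm
    · intro τ hτ
      rcases List.mem_singleton.mp hτ with rfl
      exact le_of_eq hbndt
  · have hlt : LMon f' < LMon f := by
      refine lt_of_le_of_ne (hsupp _ (lm_mem h0)) ?_
      intro hEq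
      exact absurd hf't (by rw [← hEq]; exact lcoef_ne_zero h0)
    have hf'span : f' ∈ TwoSidedIdeal.span G := by
      refine TwoSidedIdeal.sub_mem _ hf ?_
      exact smul_mem_span G c (TwoSidedIdeal.mul_mem_right _ _ _
        (TwoSidedIdeal.mul_mem_left _ _ _ (TwoSidedIdeal.subset_span hg)))
    obtain ⟨L', hGT', he', hb'⟩ := IH (LMon f') hlt f' hf'span h0 rfl
    refine ⟨(c, w, g, s) :: L', ?_, ?_, ?_⟩
    · intro τ hτ
      rcases List.mem_cons.mp hτ with rfl | h
      · exact hg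
      · exact hGT' τ h
    · rw [evalL_cons, he']
      have : tval ((c, w, g, s) : Term R n) = c • g0 := rfl
      rw [this, hf']
      abel
    · intro τ hτ
      rcases List.mem_cons.mp hτ with rfl | h
      · exact le_of_eq hbndt
      · exact le_trans (hb' τ h) hlt.le

end Div

section Fwd
variable [LinearOrder (Word n)] {G : Set (FreeAlg R n)}

lemma list_sum_fin (L : List (Term R n)) :
    evalL L = ∑ i : Fin L.length, tval (L.get i) := by
  rw [evalL]
  conv_lhs => rw [← List.ofFn_get L]
  rw [List.map_ofFn, List.sum_ofFn]
  rfl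

lemma list_to_fin (L : List (Term R n)) (t : Word n) (hG : GT G L)
    (hb : ∀ τ ∈ L, LMon (mono R τ.2.1 * τ.2.2.1 * mono R τ.2.2.2) < t) :
    ∃ (k : ℕ) (c : Fin k → R) (w s : Fin k → Word n) (h : Fin k → FreeAlg R n),
      (∀ i, h i ∈ G) ∧
      evalL L = ∑ i, c i • (mono R (w i) * h i * mono R (s i)) ∧
      ∀ i, LMon (mono R (w i) * h i * mono R (s i)) < t := by
  refine ⟨L.length, fun i => (L.get i).1, fun i => (L.get i).2.1, fun i => (L.get i).2.2.2,
    fun i => (L.get i).2.2.1, fun i => hG _ (List.get_mem L i), ?_, fun i => hb _ (List.get_mem L i)⟩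
  rw [list_sum_fin]
  rfl

lemma forward_dir (hord : IsMonomialOrder n) (hmonic : ∀ g ∈ G, IsMonic g)
    (hGB : IsMonicGB G (TwoSidedIdeal.span G)) :
    ∀ g ∈ G, ∀ g' ∈ G, ∀ u v : Word n,
      LMon g * u = v * LMon g' →
      FreeMonoid.length u < FreeMonoid.length (LMon (g' : FreeAlg R n)) →
      FreeMonoid.length v < FreeMonoid.length (LMon g) →
      (g * mono R u - mono R v * g' = 0 ∨
        ∃ (k : ℕ) (c : Fin k → R) (w s : Fin k → Word n) (h : Fin k → FreeAlg R n),
          (∀ i, h i ∈ G) ∧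
          g * mono R u - mono R v * g' =
            ∑ i, c i • (mono R (w i) * h i * mono R (s i)) ∧
          ∀ i, c i ≠ 0 → LMon (mono R (w i) * h i * mono R (s i)) < LMon g * u) := by
  intro g hg g' hg' u v heq _ _
  set f₀ := g * mono R u - mono R v * g' with hf₀
  by_cases h0 : f₀ = 0
  · exact Or.inl h0
  right
  have hgm := hmonic g hg
  have hg'm := hmonic g' hg'
  have hspan : f₀ ∈ TwoSidedIdeal.span G := by
    refine TwoSidedIdeal.sub_mem _ ?_ ?_
    · exact TwoSidedIdeal.mul_mem_right _ _ _ (TwoSidedIdeal.subset_span hg)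
    · exact TwoSidedIdeal.mul_mem_left _ _ _ (TwoSidedIdeal.subset_span hg')
  have hsupp : ∀ m ∈ f₀.coeff.support, m ≤ LMon g * u := by
    intro m hm
    rcases Finset.mem_union.mp (Finsupp.support_sub hm) with h | h
    · rw [sandwich_one_left g u] at h
      obtain ⟨x, hx, rfl⟩ := (mem_sandwich_support 1 u g m).mp h
      have := word_mul_le hord 1 u (le_lm hgm.1 hx)
      simpa using this
    · rw [sandwich_one_right g' v] at h
      obtain ⟨x, hx, rfl⟩ := (mem_sandwich_support v 1 g' m).mp h
      have := word_mul_le hord v 1 (le_lm hg'm.1 hx)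
      rw [heq]
      simpa using this
  have hcoeff : f₀ (LMon g * u) = 0 := by
    rw [hf₀, FA_sub_apply]
    have h1 : (g * mono R u) (LMon g * u) = 1 := by
      rw [sandwich_one_left g u]
      have := sandwich_apply (R := R) 1 u g (LMon g)
      rw [one_mul] at this
      rw [this]
      exact hgm.2
    have h2 : (mono R v * g') (LMon g * u) = 1 := by
      rw [sandwich_one_right g' v, heq]
      have := sandwich_apply (R := R) v 1 g' (LMon g')
      rw [mul_one] at this
      rw [this]
      exact hg'm.2
    rw [h1, h2, sub_self]
  have hlt : LMon f₀ < LMon g * u := by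
    refine lt_of_le_of_ne (hsupp _ (lm_mem h0)) ?_
    intro hEq
    exact absurd hcoeff (by rw [← hEq]; exact lcoef_ne_zero h0)
  obtain ⟨L, hGT, he, hb⟩ := div_rep hord hGB f₀ hspan h0
  have hb' : ∀ τ ∈ L, LMon (mono R τ.2.1 * τ.2.2.1 * mono R τ.2.2.2) < LMon g * u := by
    intro τ hτ
    have hne := (hmonic _ (hGT τ hτ)).1
    rw [lm_sandwich hord _ _ hne]
    exact lt_of_le_of_lt (hb τ hτ) hlt
  obtain ⟨k, c, w, s, h, h1, h2, h3⟩ := list_to_fin L (LMon g * u) hGT hb'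
  exact ⟨k, c, w, s, h, h1, by rw [← h2, he], fun i _ => h3 i⟩

end Fwd

section Words

lemma word_append_cases (a x b y : Word n) (h : a * x = b * y) :
    (∃ r : Word n, b = a * r ∧ x = r * y) ∨ (∃ r : Word n, a = b * r ∧ y = r * x) := by
  have h' : a.toList ++ x.toList = b.toList ++ y.toList := by
    have := congrArg FreeMonoid.toList h
    simpa [FreeMonoid.toList_mul] using this
  rw [List.append_eq_append_iff] at h'
  rcases h' with ⟨r, hb, hx⟩ | ⟨r, ha, hy⟩
  · exact Or.inl ⟨FreeMonoid.ofList r, hb, hx⟩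
  · exact Or.inr ⟨FreeMonoid.ofList r, ha, hy⟩

lemma word_len_lt_left {p u : Word n} (hp : p ≠ 1) :
    FreeMonoid.length u < FreeMonoid.length (p * u) := by
  rw [FreeMonoid.length_mul]
  have : p.length ≠ 0 := fun h => hp (FreeMonoid.length_eq_zero.mp h)
  omega

lemma word_len_lt_right {p u : Word n} (hp : p ≠ 1) :
    FreeMonoid.length u < FreeMonoid.length (u * p) := by
  rw [FreeMonoid.length_mul]
  have : p.length ≠ 0 := fun h => hp (FreeMonoid.length_eq_zero.mp h)
  omega

lemma word_eq_of_mul_left {a b : Word n} (h : a = a * b) : b = 1 := by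
  have : a * 1 = a * b := by rw [mul_one]; exact h
  exact (mul_left_cancel this).symm

end Words

section Tail
variable [LinearOrder (Word n)]

def tailOf (g : FreeAlg R n) : FreeAlg R n := g - mono R (LMon g)

lemma tailOf_spec {g : FreeAlg R n} (hm : IsMonic g) :
    ∀ y ∈ (tailOf g).coeff.support, y < LMon g ∧ (tailOf g) y = g y := by
  intro y hy
  have hyne : y ≠ LMon g := by
    intro hEq
    have : (tailOf g) y = 0 := by
      rw [tailOf, FA_sub_apply, hEq, mono_def]
      have : (MonoidAlgebra.single (LMon g) (1:R)) (LMon g) = 1 := Finsupp.single_eq_same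
      rw [this]
      have := hm.2
      rw [LCoef] at this
      rw [this, sub_self]
    exact absurd this (Finsupp.mem_support_iff.mp hy)
  have hval : (tailOf g) y = g y := by
    rw [tailOf, FA_sub_apply, mono_def]
    rw [coeff_single, Finsupp.single_eq_of_ne hyne, sub_zero]
  have hysupp : y ∈ g.coeff.support := by
    rw [Finsupp.mem_support_iff, ← hval]
    exact Finsupp.mem_support_iff.mp hy
  exact ⟨lt_of_le_of_ne (le_lm hm.1 hysupp) hyne, hval⟩

lemma tailOf_eq (g : FreeAlg R n) : g = mono R (LMon g) + tailOf g := by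
  rw [tailOf]; abel

end Tail

section Rewriting
variable [LinearOrder (Word n)] {G : Set (FreeAlg R n)}

lemma evalL_ofFn {k : ℕ} (F : Fin k → Term R n) :
    evalL (List.ofFn F) = ∑ i, tval (F i) := by
  rw [evalL, List.map_ofFn, List.sum_ofFn]
  rfl

/-- Disjoint occurrences rewriting. -/
lemma rewrite_disjoint (hord : IsMonomialOrder n) {g₁ g₂ : FreeAlg R n}
    (hg₁ : g₁ ∈ G) (hg₂ : g₂ ∈ G) (hm₁ : IsMonic g₁) (hm₂ : IsMonic g₂)
    (w₁ s₂ m : Word n) :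
    ∃ L' : List (Term R n), GT G L' ∧
      (∀ σ ∈ L', bnd σ < w₁ * LMon g₁ * (m * LMon g₂ * s₂)) ∧
      mono R w₁ * g₁ * mono R (m * LMon g₂ * s₂) =
        mono R (w₁ * LMon g₁ * m) * g₂ * mono R s₂ + evalL L' := by
  classical
  set X₁ := LMon g₁
  set X₂ := LMon g₂
  set t₁ := tailOf g₁ with ht₁
  set t₂ := tailOf g₂ with ht₂
  set T : Word n := w₁ * X₁ * (m * X₂ * s₂) with hT
  refine ⟨(t₂.coeff.support.toList.map (fun y => ((-(t₂ y) : R), w₁, g₁, m * y * s₂))) ++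
          (t₁.coeff.support.toList.map (fun x => ((t₁ x : R), w₁ * x * m, g₂, s₂))), ?_, ?_, ?_⟩
  · intro τ hτ
    rcases List.mem_append.mp hτ with h | h
    · obtain ⟨y, _, rfl⟩ := List.mem_map.mp h
      exact hg₁
    · obtain ⟨x, _, rfl⟩ := List.mem_map.mp h
      exact hg₂
  · intro σ hσ
    rcases List.mem_append.mp hσ with h | h
    · obtain ⟨y, hy, rfl⟩ := List.mem_map.mp h
      have hylt := (tailOf_spec hm₂ y (by simpa using hy)).1
      simp only [bnd]
      have : w₁ * X₁ * (m * y * s₂) = (w₁ * X₁ * m) * y * s₂ := by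
        simp [mul_assoc]
      rw [this, hT]
      have : w₁ * X₁ * (m * X₂ * s₂) = (w₁ * X₁ * m) * X₂ * s₂ := by
        simp [mul_assoc]
      rw [this]
      exact word_mul_lt hord _ _ hylt
    · obtain ⟨x, hx, rfl⟩ := List.mem_map.mp h
      have hxlt := (tailOf_spec hm₁ x (by simpa using hx)).1
      simp only [bnd]
      have e1 : w₁ * x * m * X₂ * s₂ = w₁ * x * (m * X₂ * s₂) := by
        simp [mul_assoc]
      rw [e1, hT]
      exact word_mul_lt hord _ _ hxlt
  · rw [evalL_append, evalL_toList_map, evalL_toList_map]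
    have key : mono R w₁ * g₁ * mono R (m * X₂ * s₂) -
        mono R (w₁ * X₁ * m) * g₂ * mono R s₂ =
        (mono R w₁ * g₁ * mono R m) * (mono R X₂ - g₂) * mono R s₂ +
        mono R w₁ * (g₁ - mono R X₁) * (mono R m * g₂ * mono R s₂) := by
      simp only [mono_mul]
      noncomm_ring
    have e2 : (mono R w₁ * g₁ * mono R m) * (mono R X₂ - g₂) * mono R s₂ =
        ∑ y ∈ t₂.coeff.support, tval (((-(t₂ y) : R), w₁, g₁, m * y * s₂) : Term R n) := by
      have : mono R X₂ - g₂ = -t₂ := by rw [ht₂, tailOf]; abel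
      rw [this]
      have : t₂ = ∑ y ∈ t₂.coeff.support, t₂ y • mono R y := decomp t₂
      calc (mono R w₁ * g₁ * mono R m) * -t₂ * mono R s₂
          = ∑ y ∈ t₂.coeff.support, (mono R w₁ * g₁ * mono R m) * -(t₂ y • mono R y) * mono R s₂ := by
            conv_lhs => rw [this]
            rw [← Finset.sum_neg_distrib, Finset.mul_sum, Finset.sum_mul]
      _ = _ := by
            refine Finset.sum_congr rfl fun y hy => ?_
            simp only [tval, mono_mul, mul_neg, neg_mul, neg_smul, smul_mul_assoc,
              mul_smul_comm, mul_assoc]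
    have e3 : mono R w₁ * (g₁ - mono R X₁) * (mono R m * g₂ * mono R s₂) =
        ∑ x ∈ t₁.coeff.support, tval (((t₁ x : R), w₁ * x * m, g₂, s₂) : Term R n) := by
      have : g₁ - mono R X₁ = t₁ := by rw [ht₁, tailOf]
      rw [this]
      have ht : t₁ = ∑ x ∈ t₁.coeff.support, t₁ x • mono R x := decomp t₁
      calc mono R w₁ * t₁ * (mono R m * g₂ * mono R s₂)
          = ∑ x ∈ t₁.coeff.support, mono R w₁ * (t₁ x • mono R x) * (mono R m * g₂ * mono R s₂) := by
            conv_lhs => rw [ht]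
            rw [Finset.mul_sum, Finset.sum_mul]
      _ = _ := by
            refine Finset.sum_congr rfl fun x hx => ?_
            simp only [tval, mono_mul, smul_mul_assoc, mul_smul_comm, mul_assoc]
    rw [← e2, ← e3]
    rw [← key]
    abel

end Rewriting

section Core
variable [LinearOrder (Word n)] {G : Set (FreeAlg R n)}

/-- The overlap hypothesis (RHS of the termination theorem). -/
def OvHyp (G : Set (FreeAlg R n)) : Prop :=
  ∀ g ∈ G, ∀ g' ∈ G, ∀ u v : Word n,
    LMon g * u = v * LMon g' →
    FreeMonoid.length u < FreeMonoid.length (LMon (g' : FreeAlg R n)) →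
    FreeMonoid.length v < FreeMonoid.length (LMon g) →
    (g * mono R u - mono R v * g' = 0 ∨
      ∃ (k : ℕ) (c : Fin k → R) (w s : Fin k → Word n) (h : Fin k → FreeAlg R n),
        (∀ i, h i ∈ G) ∧
        g * mono R u - mono R v * g' =
          ∑ i, c i • (mono R (w i) * h i * mono R (s i)) ∧
        ∀ i, c i ≠ 0 → LMon (mono R (w i) * h i * mono R (s i)) < LMon g * u)

lemma evalL_filter_nz (L : List (Term R n)) :
    evalL (L.filter (fun τ => τ.1 ≠ 0)) = evalL L := by
  induction L with
  | nil => rfl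
  | cons τ L ih =>
    by_cases h : τ.1 ≠ 0
    · rw [List.filter_cons_of_pos (by simpa using h), evalL_cons, evalL_cons, ih]
    · rw [List.filter_cons_of_neg (by simpa using h), evalL_cons, ih]
      push_neg at h
      have : tval τ = 0 := by rw [tval, h, zero_smul]
      rw [this, zero_add]

lemma rewrite_core (hord : IsMonomialOrder n) (hmonic : ∀ g ∈ G, IsMonic g)
    (hred : LMReduced G) (hov : OvHyp G)
    {g₁ g₂ : FreeAlg R n} (hg₁ : g₁ ∈ G) (hg₂ : g₂ ∈ G) (w₁ s₁ s₂ r : Word n)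
    (hsplit : LMon g₁ * s₁ = r * (LMon g₂ * s₂)) :
    ∃ L' : List (Term R n), GT G L' ∧ (∀ σ ∈ L', bnd σ < w₁ * LMon g₁ * s₁) ∧
      mono R w₁ * g₁ * mono R s₁ = mono R (w₁ * r) * g₂ * mono R s₂ + evalL L' := by
  classical
  have hm₁ := hmonic g₁ hg₁
  have hm₂ := hmonic g₂ hg₂
  rcases word_append_cases _ _ _ _ hsplit with ⟨q, hr, hs₁⟩ | ⟨p, hX₁, hXs⟩
  · -- disjoint: r = X₁ * q, s₁ = q * (X₂ * s₂)
    obtain ⟨L', h1, h2, h3⟩ := rewrite_disjoint (G := G) hord hg₁ hg₂ hm₁ hm₂ w₁ s₂ q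
    refine ⟨L', h1, ?_, ?_⟩
    · intro σ hσ
      have := h2 σ hσ
      rw [hs₁]
      convert this using 2
      simp [mul_assoc]
    · rw [hs₁, hr]
      convert h3 using 3
      · simp [mul_assoc]
      · simp [mul_assoc]
  · -- X₁ = r * p, X₂ * s₂ = p * s₁
    rcases word_append_cases _ _ _ _ hXs with ⟨e, hp, hs₂⟩ | ⟨u, hX₂, hs₁⟩
    · -- inclusion: p = X₂ * e, so X₁ = r * X₂ * e
      have hdvd : MDvd (LMon g₂) (LMon g₁) := ⟨r, e, by rw [hX₁, hp, mul_assoc]⟩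
      by_cases hgg : g₁ = g₂
      · subst hgg
        have hre : r = 1 ∧ e = 1 := by
          have hlen := congrArg FreeMonoid.length (hX₁.trans (by rw [hp]))
          rw [FreeMonoid.length_mul, FreeMonoid.length_mul] at hlen
          constructor
          · exact FreeMonoid.length_eq_zero.mp (by omega)
          · exact FreeMonoid.length_eq_zero.mp (by omega)
        obtain ⟨hr1, he1⟩ := hre
        subst hr1; subst he1
        refine ⟨[], fun τ hτ => absurd hτ List.not_mem_nil, fun σ hσ => absurd hσ List.not_mem_nil, ?_⟩
        rw [evalL_nil, add_zero, mul_one]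
        have : s₂ = s₁ := by
          have : LMon g₁ * s₁ = LMon g₁ * s₂ := by
            rw [hsplit, one_mul, hX₁, hp, one_mul, mul_one]
          exact (mul_left_cancel this).symm
        rw [this]
      · exact absurd hdvd (hred g₂ hg₂ g₁ hg₁ (Ne.symm hgg))
    · -- X₂ = p * u, s₁ = u * s₂
      by_cases hp1 : p = 1
      · -- adjacent disjoint: X₁ = r, X₂ = u
        subst hp1
        rw [one_mul] at hX₂
        rw [mul_one] at hX₁
        obtain ⟨L', h1, h2, h3⟩ := rewrite_disjoint (G := G) hord hg₁ hg₂ hm₁ hm₂ w₁ s₂ 1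
        refine ⟨L', h1, ?_, ?_⟩
        · intro σ hσ
          have := h2 σ hσ
          rw [hs₁, ← hX₂]
          simpa using this
        · rw [hs₁, ← hX₂, ← hX₁]
          simpa using h3
      · -- p ≠ 1
        by_cases hr1 : r = 1
        · -- X₁ = p ; X₂ = X₁ * u
          subst hr1
          rw [one_mul] at hX₁
          subst hX₁
          by_cases hu1 : u = 1
          · subst hu1
            rw [mul_one] at hX₂
            by_cases hgg : g₁ = g₂
            · subst hgg
              refine ⟨[], fun τ hτ => absurd hτ List.not_mem_nil,
                fun σ hσ => absurd hσ List.not_mem_nil, ?_⟩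
              rw [evalL_nil, add_zero, mul_one, hs₁, one_mul]
            · exact absurd ⟨1, 1, by rw [← hX₂, one_mul, mul_one]⟩
                (hred g₁ hg₁ g₂ hg₂ hgg)
          · by_cases hgg : g₁ = g₂
            · subst hgg
              exact absurd (word_eq_of_mul_left hX₂) hu1
            · exact absurd ⟨1, u, by rw [hX₂, one_mul]⟩ (hred g₁ hg₁ g₂ hg₂ hgg)
        · by_cases hu1 : u = 1
          · -- X₂ = p, X₁ = r * X₂
            subst hu1
            rw [mul_one] at hX₂
            subst hX₂
            by_cases hgg : g₁ = g₂
            · subst hgg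
              have h' : r * LMon g₁ = 1 * LMon g₁ := by rw [← hX₁, one_mul]
              exact absurd (mul_right_cancel h') hr1
            · exact absurd ⟨r, 1, by rw [hX₁, mul_one]⟩ (hred g₂ hg₂ g₁ hg₁ (Ne.symm hgg))
          · -- genuine overlap
            have hovl : LMon g₁ * u = r * LMon g₂ := by
              rw [hX₁, hX₂, mul_assoc]
            have hlu : FreeMonoid.length u < FreeMonoid.length (LMon g₂) := by
              rw [hX₂]; exact word_len_lt_left hp1
            have hlr : FreeMonoid.length r < FreeMonoid.length (LMon g₁) := by
              rw [hX₁]; exact word_len_lt_right hp1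
            have hkey : mono R w₁ * g₁ * mono R s₁ - mono R (w₁ * r) * g₂ * mono R s₂ =
                mono R w₁ * (g₁ * mono R u - mono R r * g₂) * mono R s₂ := by
              rw [hs₁]
              simp only [mono_mul]
              noncomm_ring
            rcases hov g₁ hg₁ g₂ hg₂ u r hovl hlu hlr with hz | ⟨k, c, w', s', h, hG', heq', hlt'⟩
            · refine ⟨[], fun τ hτ => absurd hτ List.not_mem_nil,
                fun σ hσ => absurd hσ List.not_mem_nil, ?_⟩
              rw [evalL_nil, add_zero]
              have := sub_eq_zero.mp (by rw [hkey, hz, mul_zero, zero_mul])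
              exact this
            · set F : Fin k → Term R n := fun i => (c i, w₁ * w' i, h i, s' i * s₂) with hF
              refine ⟨(List.ofFn F).filter (fun τ => τ.1 ≠ 0), ?_, ?_, ?_⟩
              · intro τ hτ
                have := List.mem_filter.mp hτ
                obtain ⟨i, rfl⟩ := List.mem_ofFn.mp this.1
                exact hG' i
              · intro σ hσ
                have hmem := List.mem_filter.mp hσ
                obtain ⟨i, rfl⟩ := List.mem_ofFn.mp hmem.1
                have hci : c i ≠ 0 := by simpa [hF] using hmem.2
                have hlm := hlt' i hci
                have hhne := (hmonic _ (hG' i)).1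
                rw [lm_sandwich hord _ _ hhne] at hlm
                simp only [bnd, hF]
                have e1 : w₁ * w' i * LMon (h i) * (s' i * s₂) =
                    w₁ * (w' i * LMon (h i) * s' i) * s₂ := by simp [mul_assoc]
                have e2 : w₁ * LMon g₁ * s₁ = w₁ * (LMon g₁ * u) * s₂ := by
                  rw [hs₁]; simp [mul_assoc]
                rw [e1, e2]
                exact word_mul_lt hord _ _ hlm
              · rw [evalL_filter_nz]
                have hsum : mono R w₁ * (g₁ * mono R u - mono R r * g₂) * mono R s₂ =
                    evalL (List.ofFn F) := by
                  rw [evalL_ofFn, heq']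
                  rw [Finset.mul_sum, Finset.sum_mul]
                  refine Finset.sum_congr rfl fun i _ => ?_
                  simp only [hF, tval, mono_mul, smul_mul_assoc, mul_smul_comm, mul_assoc]
                rw [← hsum, ← hkey]
                abel

end Core

section Pair
variable [LinearOrder (Word n)] {G : Set (FreeAlg R n)}

lemma rewrite_pair (hord : IsMonomialOrder n) (hmonic : ∀ g ∈ G, IsMonic g)
    (hred : LMReduced G) (hov : OvHyp G)
    {g₁ g₂ : FreeAlg R n} (hg₁ : g₁ ∈ G) (hg₂ : g₂ ∈ G) (w₁ s₁ w₂ s₂ : Word n)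
    (hb : w₁ * LMon g₁ * s₁ = w₂ * LMon g₂ * s₂) :
    ∃ L' : List (Term R n), GT G L' ∧ (∀ σ ∈ L', bnd σ < w₁ * LMon g₁ * s₁) ∧
      mono R w₁ * g₁ * mono R s₁ = mono R w₂ * g₂ * mono R s₂ + evalL L' := by
  have hb' : w₁ * (LMon g₁ * s₁) = w₂ * (LMon g₂ * s₂) := by
    rw [← mul_assoc, ← mul_assoc]; exact hb
  rcases word_append_cases _ _ _ _ hb' with ⟨r, hw, hsp⟩ | ⟨r, hw, hsp⟩
  · obtain ⟨L', h1, h2, h3⟩ := rewrite_core hord hmonic hred hov hg₁ hg₂ w₁ s₁ s₂ r hsp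
    exact ⟨L', h1, h2, by rw [hw]; exact h3⟩
  · obtain ⟨L', h1, h2, h3⟩ := rewrite_core hord hmonic hred hov hg₂ hg₁ w₂ s₂ s₁ r hsp
    refine ⟨L'.map (scaleT (-1)), ?_, ?_, ?_⟩
    · intro τ hτ
      obtain ⟨σ, hσ, rfl⟩ := List.mem_map.mp hτ
      exact h1 σ hσ
    · intro σ hσ
      obtain ⟨σ', hσ', rfl⟩ := List.mem_map.mp hσ
      rw [bnd_scaleT, hb]
      exact h2 σ' hσ'
    · rw [evalL_map_scaleT]
      rw [← hw] at h3
      rw [h3, neg_one_smul]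
      abel

lemma exists_max_bnd (L : List (Term R n)) (hne : L ≠ []) :
    ∃ τ₀ ∈ L, ∀ τ ∈ L, bnd τ ≤ bnd τ₀ := by
  induction L with
  | nil => exact absurd rfl hne
  | cons τ L ih =>
    by_cases hL : L = []
    · subst hL
      exact ⟨τ, List.mem_cons_self .., fun σ hσ => by
        rcases List.mem_singleton.mp hσ with rfl; exact le_rfl⟩
    · obtain ⟨τ₀, hτ₀, hmax⟩ := ih hL
      by_cases hc : bnd τ ≤ bnd τ₀
      · refine ⟨τ₀, List.mem_cons_of_mem _ hτ₀, fun σ hσ => ?_⟩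
        rcases List.mem_cons.mp hσ with rfl | hσ'
        · exact hc
        · exact hmax σ hσ'
      · refine ⟨τ, List.mem_cons_self .., fun σ hσ => ?_⟩
        rcases List.mem_cons.mp hσ with rfl | hσ'
        · exact le_rfl
        · exact le_trans (hmax σ hσ') (le_of_not_ge hc)

lemma evalL_perm {L₁ L₂ : List (Term R n)} (h : L₁.Perm L₂) : evalL L₁ = evalL L₂ :=
  (h.map tval).sum_eq

end Pair

section Backward
variable [LinearOrder (Word n)] {G : Set (FreeAlg R n)}

lemma backward_dir (hord : IsMonomialOrder n) (hmonic : ∀ g ∈ G, IsMonic g)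
    (hred : LMReduced G) (hov : OvHyp G) :
    ∀ f ∈ TwoSidedIdeal.span G, f ≠ 0 → ∃ g ∈ G, MDvd (LMon g) (LMon f) := by
  classical
  suffices H : ∀ pr : Word n × ℕ, ∀ f : FreeAlg R n, ∀ L : List (Term R n), GT G L →
      evalL L = f → f ≠ 0 → (∀ τ ∈ L, bnd τ ≤ pr.1) →
      ((L.filter (fun τ => bnd τ = pr.1)).length ≤ pr.2) →
      ∃ g ∈ G, MDvd (LMon g) (LMon f) by
    intro f hf hne
    obtain ⟨L, hGL, he⟩ := span_rep hf
    by_cases hL : L = []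
    · subst hL; exact absurd he.symm hne
    obtain ⟨τ₀, _, hmax⟩ := exists_max_bnd L hL
    exact H (bnd τ₀, L.length) f L hGL he hne hmax (List.length_filter_le _ _)
  have hwf : WellFounded (Prod.Lex ((· < ·) : Word n → Word n → Prop)
      ((· < ·) : ℕ → ℕ → Prop)) := WellFounded.prod_lex hord.1.wf Nat.lt_wfRel.wf
  intro pr
  induction pr using hwf.induction with
  | _ pr IH =>
  obtain ⟨t, k⟩ := pr
  intro f L hGL he hne hb hk
  -- remove zero-coefficient terms
  set Lf := L.filter (fun τ => τ.1 ≠ 0) with hLf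
  have hsub : Lf.Sublist L := List.filter_sublist
  have hGf : GT G Lf := fun τ hτ => hGL τ (hsub.mem hτ)
  have hef : evalL Lf = f := by rw [hLf, evalL_filter_nz, he]
  have hbf : ∀ τ ∈ Lf, bnd τ ≤ t := fun τ hτ => hb τ (hsub.mem hτ)
  have hnz : ∀ τ ∈ Lf, τ.1 ≠ 0 := by
    intro τ hτ
    have := (List.mem_filter.mp hτ).2
    simpa using this
  have hmon : ∀ τ ∈ Lf, IsMonic τ.2.2.1 := fun τ hτ => hmonic _ (hGf τ hτ)
  set F := Lf.filter (fun τ => bnd τ = t) with hF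
  have hkF : F.length ≤ k := by
    calc F.length ≤ (L.filter (fun τ => bnd τ = t)).length :=
          (hsub.filter _).length_le
    _ ≤ k := hk
  have hFt : ∀ τ ∈ F, bnd τ = t := by
    intro τ hτ
    have := (List.mem_filter.mp hτ).2
    simpa using this
  have hFm : ∀ τ ∈ F, τ ∈ Lf := fun τ hτ => (List.mem_filter.mp hτ).1
  have hcoef : f t = (F.map (fun τ => τ.1)).sum := by
    rw [← hef]
    exact evalL_coeff_top hord hmon hbf
  by_cases hft : f t = 0
  · -- top coefficient vanishes
    cases hFs : F with
    | nil =>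
      -- no top terms: all bounds < t
      have hlt : ∀ τ ∈ Lf, bnd τ < t := by
        intro τ hτ
        refine lt_of_le_of_ne (hbf τ hτ) ?_
        intro hEq
        have : τ ∈ F := List.mem_filter.mpr ⟨hτ, by simpa using hEq⟩
        rw [hFs] at this
        exact absurd this List.not_mem_nil
      by_cases hLfe : Lf = []
      · rw [hLfe] at hef
        exact absurd hef.symm (by simpa using hne)
      obtain ⟨τ₀, hτ₀m, hmax⟩ := exists_max_bnd Lf hLfe
      exact IH (bnd τ₀, Lf.length) (Prod.Lex.left _ _ (hlt τ₀ hτ₀m)) f Lf hGf hef hne hmax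
        (List.length_filter_le _ _)
    | cons τ₁ F₁ =>
      cases hF₁ : F₁ with
      | nil =>
        -- a single top term with nonzero coefficient: contradiction
        exfalso
        have : f t = τ₁.1 := by rw [hcoef, hFs, hF₁]; simp
        exact hnz τ₁ (hFm τ₁ (by rw [hFs]; exact List.mem_cons_self ..)) (by rw [← this, hft])
      | cons τ₂ F' =>
        -- at least two top terms: rewrite
        have hτ₁F : τ₁ ∈ F := by rw [hFs]; exact List.mem_cons_self ..
        have hτ₂F : τ₂ ∈ F := by
          rw [hFs, hF₁]; exact List.mem_cons_of_mem _ (List.mem_cons_self ..)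
        obtain ⟨c₁, w₁, g₁, s₁⟩ := τ₁
        obtain ⟨c₂, w₂, g₂, s₂⟩ := τ₂
        have hg₁ : g₁ ∈ G := hGf _ (hFm _ hτ₁F)
        have hg₂ : g₂ ∈ G := hGf _ (hFm _ hτ₂F)
        have hb₁ : w₁ * LMon g₁ * s₁ = t := hFt _ hτ₁F
        have hb₂ : w₂ * LMon g₂ * s₂ = t := hFt _ hτ₂F
        have hmemF : ∀ τ' ∈ F', τ' ∈ F := by
          intro τ' hτ'
          rw [hFs, hF₁]
          exact List.mem_cons_of_mem _ (List.mem_cons_of_mem _ hτ')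
        obtain ⟨L'', hGT'', hbnd'', heq''⟩ := rewrite_pair hord hmonic hred hov hg₁ hg₂
          w₁ s₁ w₂ s₂ (by rw [hb₁, hb₂])
        set Lc := Lf.filter (fun τ => !(decide (bnd τ = t))) with hLc
        have hperm : (F ++ Lc).Perm Lf := List.filter_append_perm _ Lf
        have hLclt : ∀ τ ∈ Lc, bnd τ < t := by
          intro τ hτ
          have h1 := (List.mem_filter.mp hτ).1
          have h2 := (List.mem_filter.mp hτ).2
          refine lt_of_le_of_ne (hbf τ h1) ?_
          simpa using h2
        set Lnew : List (Term R n) :=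
          (c₁ + c₂, w₂, g₂, s₂) :: (F' ++ L''.map (scaleT c₁) ++ Lc) with hLnew
        have hGnew : GT G Lnew := by
          intro τ hτ
          rcases List.mem_cons.mp hτ with rfl | hτ'
          · exact hg₂
          rcases List.mem_append.mp hτ' with h | h
          · rcases List.mem_append.mp h with h | h
            · exact hGf _ (hFm _ (hmemF _ h))
            · obtain ⟨σ, hσ, rfl⟩ := List.mem_map.mp h
              exact hGT'' σ hσ
          · exact hGf _ ((List.mem_filter.mp h).1)
        have henew : evalL Lnew = f := by
          rw [← hef, ← evalL_perm hperm, evalL_append, hFs, hF₁]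
          rw [hLnew, evalL_cons, evalL_append, evalL_append, evalL_cons, evalL_cons]
          rw [evalL_map_scaleT]
          have ht1 : tval ((c₁, w₁, g₁, s₁) : Term R n) =
              c₁ • (mono R w₂ * g₂ * mono R s₂) + c₁ • evalL L'' := by
            rw [tval, heq'', smul_add]
          have ht2 : tval ((c₂, w₂, g₂, s₂) : Term R n) =
              c₂ • (mono R w₂ * g₂ * mono R s₂) := rfl
          have ht3 : tval ((c₁ + c₂, w₂, g₂, s₂) : Term R n) =
              c₁ • (mono R w₂ * g₂ * mono R s₂) + c₂ • (mono R w₂ * g₂ * mono R s₂) := by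
            rw [tval, add_smul]
          rw [ht1, ht2, ht3]
          abel
        have hbnew : ∀ τ ∈ Lnew, bnd τ ≤ t := by
          intro τ hτ
          rcases List.mem_cons.mp hτ with rfl | hτ'
          · exact le_of_eq hb₂
          rcases List.mem_append.mp hτ' with h | h
          · rcases List.mem_append.mp h with h | h
            · exact le_of_eq (hFt _ (hmemF _ h))
            · obtain ⟨σ, hσ, rfl⟩ := List.mem_map.mp h
              rw [bnd_scaleT]
              exact le_of_lt (by rw [← hb₁]; exact hbnd'' σ hσ)
          · exact (hLclt τ h).le
        have hknew : (Lnew.filter (fun τ => bnd τ = t)).length ≤ k - 1 := by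
          have hF'len : F.length = F'.length + 2 := by rw [hFs, hF₁]; simp
          have e0 : List.filter (fun τ => decide (bnd τ = t)) Lnew =
              (c₁ + c₂, w₂, g₂, s₂) :: F' := by
            rw [hLnew, List.filter_cons_of_pos (p := fun τ => decide (bnd τ = t))
              (a := (c₁ + c₂, w₂, g₂, s₂)) (decide_eq_true hb₂)]
            congr 1
            rw [List.filter_append, List.filter_append]
            have e1 : List.filter (fun τ => decide (bnd τ = t)) F' = F' := by
              rw [List.filter_eq_self]
              intro τ hτ
              simpa using hFt _ (hmemF _ hτ)
            have e2 : List.filter (fun τ => decide (bnd τ = t)) (L''.map (scaleT c₁)) = [] := by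
              rw [List.filter_eq_nil_iff]
              intro σ hσ
              obtain ⟨σ', hσ', rfl⟩ := List.mem_map.mp hσ
              have := hbnd'' σ' hσ'
              rw [← hb₁] at *
              simp only [bnd_scaleT]
              exact fun hc => ne_of_lt this (of_decide_eq_true hc)
            have e3 : List.filter (fun τ => decide (bnd τ = t)) Lc = [] := by
              rw [List.filter_eq_nil_iff]
              intro σ hσ
              simpa using ne_of_lt (hLclt σ hσ)
            rw [e1, e2, e3, List.append_nil, List.append_nil]
          have : (Lnew.filter (fun τ => bnd τ = t)).length = F'.length + 1 := by
            rw [e0]; simp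
          omega
        have hk2 : 2 ≤ k := by
          have : F.length = F'.length + 2 := by rw [hFs, hF₁]; simp
          omega
        exact IH (t, k - 1) (Prod.Lex.right _ (by omega)) f Lnew hGnew henew hne hbnew hknew
  · -- the top coefficient survives: LMon f = t and it is divisible
    have htsupp : t ∈ f.coeff.support := Finsupp.mem_support_iff.mpr hft
    have hle : ∀ m ∈ f.coeff.support, m ≤ t := by
      intro m hm
      rw [← hef] at hm
      obtain ⟨τ, hτ, _, hmle⟩ := supp_evalL hord hm
      exact le_trans hmle (hbf τ hτ)
    have hlm : LMon f = t := lm_eq_of hne htsupp hle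
    have hFne : F ≠ [] := by
      intro hFe
      rw [hFe] at hcoef
      simp at hcoef
      exact hft hcoef
    obtain ⟨τ, hτF⟩ := List.exists_mem_of_ne_nil F hFne
    refine ⟨τ.2.2.1, hGf _ (hFm _ hτF), τ.2.1, τ.2.2.2, ?_⟩
    rw [hlm, ← hFt _ hτF]
    rfl

end Backward

/-- **Termination theorem.** An LM-reduced monic subset `G` is a monic
Gröbner basis of `⟨G⟩` iff every overlap element `o(g,u;v,g') = g·u − v·g'` (where
`LM(g)·u = v·LM(g')`, `|u| < |LM(g')|`, `|v| < |LM(g)|`) reduces to `0` by division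
by `G`. -/
theorem termination_theorem [LinearOrder (Word n)] (hord : IsMonomialOrder n)
    (G : Set (FreeAlg R n)) (hmonic : ∀ g ∈ G, IsMonic g) (hred : LMReduced G) :
    IsMonicGB G (TwoSidedIdeal.span G) ↔
      ∀ g ∈ G, ∀ g' ∈ G, ∀ u v : Word n,
        LMon g * u = v * LMon g' →
        FreeMonoid.length u < FreeMonoid.length (LMon (g' : FreeAlg R n)) →
        FreeMonoid.length v < FreeMonoid.length (LMon g) →
        (g * mono R u - mono R v * g' = 0 ∨
          ∃ (k : ℕ) (c : Fin k → R) (w s : Fin k → Word n) (h : Fin k → FreeAlg R n),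
            (∀ i, h i ∈ G) ∧
            g * mono R u - mono R v * g' =
              ∑ i, c i • (mono R (w i) * h i * mono R (s i)) ∧
            ∀ i, c i ≠ 0 → LMon (mono R (w i) * h i * mono R (s i)) < LMon g * u) := by
  constructor
  · intro hGB
    exact forward_dir hord hmonic hGB
  · intro hov
    exact ⟨hmonic, backward_dir hord hmonic hred hov⟩
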